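/- (Lemma 1) Fix an integer M ≥ 3, constants C0 > 0 and γ̃ > 0, and for a time-allocation vector η = (η_1,…,η_M) with η_m ≥ 0, Σ_m η_m = 1, and azimuth angles φ = (φ_1,…,φ_M), define CRLB(η, φ) = C0·(Σ_{m=1}^M η_m γ̃) / (Σ_{1≤j<i≤M} η_j γ̃ · η_i γ̃ · sin²(φ_i − φ_j)), defined whenever the denominator is positive. Then CRLB(η, φ) ≥ 4C0/γ̃ for every such (η, φ), and equality holds at η_m = 1/M and φ_m = 2π(m−1)/M for m = 1,…,M. In particular, when γ̃ = (ΔT β₀² L² / (Δt d̲⁴ σ_s²)) · (d̲² − (H_BS − H_IRS)²)/d̲² (all constants positive, d̲ > |H_BS − H_IRS|), the minimum CRLB equals 4 C0 Δt d̲⁶ σ_s² / (ΔT β₀² L² (d̲² − (H_BS − H_IRS)²)). -/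

import Mathlib

open Real Finset

/-- The single-target localization CRLB for time allocation `η`, azimuths `φ`, equal
equivalent SNR `γ` and estimator constant `C0`:
`CRLB(η,φ) = C0·(Σ_m η_m γ) / (Σ_{j<i} η_j γ · η_i γ · sin²(φ_i − φ_j))`. -/
noncomputable def crlbEq (M : ℕ) (C0 γ : ℝ) (η φ : Fin M → ℝ) : ℝ :=
  C0 * (∑ m, η m * γ) /
    (∑ i : Fin M, ∑ j ∈ Finset.Iio i, (η j * γ) * (η i * γ) * sin (φ i - φ j) ^ 2)

/-- Symmetrization of a sum over strict lower triangles. -/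
lemma two_mul_sum_Iio {M : ℕ} (F : Fin M → Fin M → ℝ)
    (hsym : ∀ i j, F i j = F j i) (hdiag : ∀ i, F i i = 0) :
    2 * (∑ i : Fin M, ∑ j ∈ Finset.Iio i, F i j) = ∑ i : Fin M, ∑ j : Fin M, F i j := by
  have h1 : ∀ i : Fin M, ∑ j ∈ Finset.Iio i, F i j = ∑ j : Fin M, if j < i then F i j else 0 := by
    intro i
    rw [show Finset.Iio i = Finset.univ.filter (· < i) from by ext; simp, Finset.sum_filter]
  simp_rw [h1]
  have hswap : (∑ i : Fin M, ∑ j : Fin M, if j < i then F i j else 0)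
      = ∑ i : Fin M, ∑ j : Fin M, if i < j then F i j else 0 := by
    rw [Finset.sum_comm]
    refine Finset.sum_congr rfl fun i _ => Finset.sum_congr rfl fun j _ => ?_
    rw [hsym]
  rw [two_mul]
  nth_rewrite 2 [hswap]
  rw [← Finset.sum_add_distrib]
  refine Finset.sum_congr rfl fun i _ => ?_
  rw [← Finset.sum_add_distrib]
  refine Finset.sum_congr rfl fun j _ => ?_
  rcases lt_trichotomy j i with h | h | h
  · simp [h, not_lt_of_gt h]
  · simp [h, hdiag]
  · simp [h, not_lt_of_gt h]

/-- Key trigonometric identity for the pairwise sum. -/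
lemma key_identity {M : ℕ} (η φ : Fin M → ℝ) :
    4 * (∑ i : Fin M, ∑ j ∈ Finset.Iio i, η j * η i * sin (φ i - φ j) ^ 2)
      = (∑ m, η m) ^ 2 - (∑ m, η m * cos (2 * φ m)) ^ 2
        - (∑ m, η m * sin (2 * φ m)) ^ 2 := by
  have h2 := two_mul_sum_Iio (fun i j => η j * η i * sin (φ i - φ j) ^ 2)
    (fun i j => by
      rw [show φ i - φ j = -(φ j - φ i) by ring, Real.sin_neg]
      ring)
    (fun i => by simp)
  have hA : (∑ m, η m) ^ 2 = ∑ i : Fin M, ∑ j : Fin M, η i * η j := by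
    rw [sq, Finset.sum_mul_sum]
  have hB : (∑ m, η m * cos (2 * φ m)) ^ 2
      = ∑ i : Fin M, ∑ j : Fin M, (η i * cos (2 * φ i)) * (η j * cos (2 * φ j)) := by
    rw [sq, Finset.sum_mul_sum]
  have hC : (∑ m, η m * sin (2 * φ m)) ^ 2
      = ∑ i : Fin M, ∑ j : Fin M, (η i * sin (2 * φ i)) * (η j * sin (2 * φ j)) := by
    rw [sq, Finset.sum_mul_sum]
  rw [hA, hB, hC, show (4 : ℝ) = 2 * 2 by norm_num, mul_assoc, h2]
  rw [← Finset.sum_sub_distrib, ← Finset.sum_sub_distrib, Finset.mul_sum]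
  refine Finset.sum_congr rfl fun i _ => ?_
  rw [← Finset.sum_sub_distrib, ← Finset.sum_sub_distrib, Finset.mul_sum]
  refine Finset.sum_congr rfl fun j _ => ?_
  have hc : Real.cos (2 * φ i - 2 * φ j)
      = cos (2 * φ i) * cos (2 * φ j) + sin (2 * φ i) * sin (2 * φ j) := Real.cos_sub _ _
  have hs : Real.sin (φ i - φ j) ^ 2 = 1 / 2 - cos (2 * (φ i - φ j)) / 2 :=
    Real.sin_sq_eq_half_sub _
  have h2φ : 2 * (φ i - φ j) = 2 * φ i - 2 * φ j := by ring
  rw [h2φ] at hs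
  linear_combination (2 * η j * η i) * hs - η i * η j * hc

/-- The sum of `exp (4π m/M · I)` over `m < M` vanishes for `M ≥ 3`. -/
lemma exp_sum_zero {M : ℕ} (hM : 3 ≤ M) :
    ∑ m : Fin M, Complex.exp ((4 * π / M * m : ℝ) * Complex.I) = 0 := by
  have hM0 : (M : ℝ) ≠ 0 := by positivity
  set z : ℂ := Complex.exp ((4 * π / M : ℝ) * Complex.I) with hz
  have hzm : ∀ m : ℕ, Complex.exp ((4 * π / M * m : ℝ) * Complex.I) = z ^ m := by
    intro m
    rw [hz, ← Complex.exp_nat_mul]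
    congr 1
    push_cast
    ring
  have hz1 : z ≠ 1 := by
    rw [hz, Ne, Complex.exp_eq_one_iff]
    rintro ⟨n, hn⟩
    have hn' : ((4 * π / M : ℝ) : ℂ) * Complex.I = ((n : ℂ) * (2 * π)) * Complex.I := by
      linear_combination hn
    have hI : ((4 * π / M : ℝ) : ℂ) = (n : ℂ) * (2 * π) :=
      mul_right_cancel₀ Complex.I_ne_zero hn'
    have hR : (4 * π / M : ℝ) = (n : ℝ) * (2 * π) := by
      exact_mod_cast hI
    have hπ := Real.pi_pos
    have hMpos : (0 : ℝ) < M := by positivity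
    have hM3 : (3 : ℝ) ≤ M := by exact_mod_cast hM
    have hlt : (4 * π / M : ℝ) < 2 * π := by
      rw [div_lt_iff₀ hMpos]
      nlinarith
    have hgt : (0 : ℝ) < 4 * π / M := by positivity
    rcases le_or_gt (n : ℝ) 0 with h | h
    · nlinarith
    · have : (1 : ℝ) ≤ n := by exact_mod_cast (by exact_mod_cast h : (0:ℤ) < n)
      nlinarith
  have hzM : z ^ M = 1 := by
    rw [hz, ← Complex.exp_nat_mul]
    have hM0C : (M : ℂ) ≠ 0 := by exact_mod_cast hM0
    have : (M : ℂ) * (((4 * π / M : ℝ) : ℂ) * Complex.I)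
        = ((2 : ℕ) : ℂ) * (2 * π * Complex.I) := by
      push_cast
      field_simp
      ring
    rw [this, Complex.exp_nat_mul, Complex.exp_two_pi_mul_I, one_pow]
  calc ∑ m : Fin M, Complex.exp ((4 * π / M * m : ℝ) * Complex.I)
      = ∑ m ∈ Finset.range M, z ^ m := by
        rw [← Fin.sum_univ_eq_sum_range]
        exact Finset.sum_congr rfl fun m _ => hzm m
    _ = (z ^ M - 1) / (z - 1) := geom_sum_eq hz1 M
    _ = 0 := by rw [hzM]; simp

theorem lemma1_crlb_lower_bound (M : ℕ) (hM : 3 ≤ M) (C0 γ : ℝ) (hC0 : 0 < C0) (hγ : 0 < γ)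
    (ΔT Δt β₀ L σs d HBS HIRS : ℝ)
    (hΔT : 0 < ΔT) (hΔt : 0 < Δt) (hβ₀ : 0 < β₀) (hL : 0 < L) (hσ : 0 < σs)
    (hd : |HBS - HIRS| < d) :
    (∀ η φ : Fin M → ℝ, (∀ m, 0 ≤ η m) → (∑ m, η m) = 1 →
        0 < (∑ i : Fin M, ∑ j ∈ Finset.Iio i, (η j * γ) * (η i * γ) * sin (φ i - φ j) ^ 2) →
        4 * C0 / γ ≤ crlbEq M C0 γ η φ)
    ∧ crlbEq M C0 γ (fun _ => 1 / M) (fun m => 2 * π * (m : ℕ) / M) = 4 * C0 / γ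
    ∧ (γ = ΔT * β₀ ^ 2 * L ^ 2 / (Δt * d ^ 4 * σs ^ 2) * ((d ^ 2 - (HBS - HIRS) ^ 2) / d ^ 2) →
        4 * C0 / γ
          = 4 * C0 * Δt * d ^ 6 * σs ^ 2 / (ΔT * β₀ ^ 2 * L ^ 2 * (d ^ 2 - (HBS - HIRS) ^ 2))) := by
  have hfactor : ∀ η φ : Fin M → ℝ,
      (∑ i : Fin M, ∑ j ∈ Finset.Iio i, (η j * γ) * (η i * γ) * sin (φ i - φ j) ^ 2)
        = γ ^ 2 * ∑ i : Fin M, ∑ j ∈ Finset.Iio i, η j * η i * sin (φ i - φ j) ^ 2 := by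
    intro η φ
    rw [Finset.mul_sum]
    refine Finset.sum_congr rfl fun i _ => ?_
    rw [Finset.mul_sum]
    exact Finset.sum_congr rfl fun j _ => by ring
  refine ⟨?_, ?_, ?_⟩
  · intro η φ hη hsum hpos
    set S := ∑ i : Fin M, ∑ j ∈ Finset.Iio i, η j * η i * sin (φ i - φ j) ^ 2 with hS
    have hDS := hfactor η φ
    have hSpos : 0 < S := by
      by_contra h
      push_neg at h
      nlinarith [hpos, hDS]
    have hkey := key_identity η φ
    rw [hsum] at hkey
    have hB2 : 0 ≤ (∑ m : Fin M, η m * cos (2 * φ m)) ^ 2 := sq_nonneg _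
    have hC2 : 0 ≤ (∑ m : Fin M, η m * sin (2 * φ m)) ^ 2 := sq_nonneg _
    have hSle : S ≤ 1 / 4 := by nlinarith
    have hnum : (∑ m, η m * γ) = γ := by rw [← Finset.sum_mul, hsum, one_mul]
    unfold crlbEq
    rw [hnum, hDS]
    have hden : 0 < γ ^ 2 * S := by positivity
    rw [div_le_div_iff₀ hγ hden]
    nlinarith [mul_le_mul_of_nonneg_left hSle (show (0:ℝ) ≤ C0 * γ ^ 2 by positivity)]
  · have hM0 : (M : ℝ) ≠ 0 := by positivity
    have hcos : (∑ m : Fin M, (1 / M : ℝ) * cos (2 * (2 * π * (m : ℕ) / M))) = 0 := by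
      have := congrArg Complex.re (exp_sum_zero hM)
      rw [Complex.re_sum] at this
      simp only [Complex.exp_ofReal_mul_I_re, Complex.zero_re] at this
      rw [← Finset.mul_sum]
      rw [show (∑ m : Fin M, cos (2 * (2 * π * (m : ℕ) / M)))
        = ∑ m : Fin M, cos (4 * π / M * (m : ℕ)) from Finset.sum_congr rfl fun m _ => by
          ring_nf, this, mul_zero]
    have hsin : (∑ m : Fin M, (1 / M : ℝ) * sin (2 * (2 * π * (m : ℕ) / M))) = 0 := by
      have := congrArg Complex.im (exp_sum_zero hM)
      rw [Complex.im_sum] at this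
      simp only [Complex.exp_ofReal_mul_I_im, Complex.zero_im] at this
      rw [← Finset.mul_sum]
      rw [show (∑ m : Fin M, sin (2 * (2 * π * (m : ℕ) / M)))
        = ∑ m : Fin M, sin (4 * π / M * (m : ℕ)) from Finset.sum_congr rfl fun m _ => by
          ring_nf, this, mul_zero]
    have hone : (∑ _m : Fin M, (1 / M : ℝ)) = 1 := by
      rw [Finset.sum_const, Finset.card_univ, Fintype.card_fin, nsmul_eq_mul]
      field_simp
    have hkey := key_identity (M := M) (fun _ => 1 / M) (fun m => 2 * π * (m : ℕ) / M)
    rw [hone, hcos, hsin] at hkey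
    have hS : (∑ i : Fin M, ∑ j ∈ Finset.Iio i,
        ((1 : ℝ) / M) * (1 / M) * sin (2 * π * (i : ℕ) / M - 2 * π * (j : ℕ) / M) ^ 2)
        = 1 / 4 := by linarith
    unfold crlbEq
    rw [hfactor (fun _ => 1 / M) (fun m => 2 * π * (m : ℕ) / M)]
    simp only
    rw [hS, ← Finset.sum_mul, hone, one_mul]
    field_simp
  · intro hγeq
    have hd0 : 0 < d := lt_of_le_of_lt (abs_nonneg _) hd
    have hdh : 0 < d ^ 2 - (HBS - HIRS) ^ 2 := by
      nlinarith [sq_abs (HBS - HIRS), abs_nonneg (HBS - HIRS)]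
    rw [hγeq]
    have h1 : ΔT * β₀ ^ 2 * L ^ 2 ≠ 0 := by positivity
    have h2 : Δt * d ^ 4 * σs ^ 2 ≠ 0 := by positivity
    field_simp
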